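/- Let X_1, X_2, ... be an i.i.d. sequence of real-valued random variables with common distribution function F, and let F_n denote the empirical distribution function of the first n observations. Fix p ∈ (0,1). If lq_F(p) = rq_F(p), then the right sample quantile converges almost surely: rq_{F_n}(p) → rq_F(p) almost surely as n → ∞. -/

import Mathlib

open MeasureTheory ProbabilityTheory Filter Topology ENNReal

/-- Left quantile of a distribution function `F` at level `p`:
`lq F p = inf {x | F x ≥ p}`. -/
noncomputable def lq (F : ℝ → ℝ) (p : ℝ) : ℝ := sInf {x : ℝ | p ≤ F x}

/-- Right quantile of a distribution function `F` at level `p`: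
`rq F p = inf {x | F x > p}`. -/
noncomputable def rq (F : ℝ → ℝ) (p : ℝ) : ℝ := sInf {x : ℝ | p < F x}

/-- Empirical distribution function of the first `n` observations `X 0, ..., X (n-1)`:
`edf X n ω x = (1/n) * #{i < n | X i ω ≤ x}`. -/
noncomputable def edf {Ω : Type*} (X : ℕ → Ω → ℝ) (n : ℕ) (ω : Ω) (x : ℝ) : ℝ :=
  ((Finset.range n).filter (fun i => X i ω ≤ x)).card / n

lemma edf_mono {Ω : Type*} (X : ℕ → Ω → ℝ) (n : ℕ) (ω : Ω) :
    Monotone (edf X n ω) := by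
  intro x y hxy
  unfold edf
  rcases Nat.eq_zero_or_pos n with h | h
  · simp [h]
  · have hsub : (Finset.range n).filter (fun i => X i ω ≤ x) ⊆
        (Finset.range n).filter (fun i => X i ω ≤ y) := by
      intro i hi
      simp only [Finset.mem_filter] at *
      exact ⟨hi.1, hi.2.trans hxy⟩
    have hc : (((Finset.range n).filter (fun i => X i ω ≤ x)).card : ℝ) ≤
        ((Finset.range n).filter (fun i => X i ω ≤ y)).card := by
      exact_mod_cast Finset.card_le_card hsub
    have hn : (0:ℝ) < n := by exact_mod_cast h
    gcongr

/-- If the left and right quantiles of `F` at `p` coincide, then the right sample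
quantile converges almost surely to `rq F p`. -/
theorem right_sample_quantile_tendsto
    {Ω : Type*} [MeasurableSpace Ω] (μ : Measure Ω) [IsProbabilityMeasure μ]
    (X : ℕ → Ω → ℝ) (hmeas : ∀ i, Measurable (X i))
    (hindep : iIndepFun X μ)
    (hident : ∀ i, IdentDistrib (X i) (X 0) μ μ)
    (F : ℝ → ℝ) (hF : ∀ x, F x = (μ {ω | X 0 ω ≤ x}).toReal)
    (p : ℝ) (hp : p ∈ Set.Ioo (0 : ℝ) 1)
    (heq : lq F p = rq F p) :
    ∀ᵐ ω ∂μ, Tendsto (fun n => rq (edf X n ω) p) atTop (nhds (rq F p)) := by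
  obtain ⟨hp0, hp1⟩ := hp
  -- F is monotone
  have hFmono : Monotone F := by
    intro x y hxy
    rw [hF x, hF y]
    exact (ENNReal.toReal_le_toReal (measure_ne_top μ _) (measure_ne_top μ _)).mpr
      (measure_mono (fun ω hω => le_trans hω hxy))
  -- pointwise a.s. convergence of the edf (SLLN)
  have key : ∀ x : ℝ, ∀ᵐ ω ∂μ, Tendsto (fun n => edf X n ω x) atTop (𝓝 (F x)) := by
    intro x
    set φ : ℝ → ℝ := fun t => if t ≤ x then 1 else 0 with hφ
    have hφm : Measurable φ := by
      have : MeasurableSet {t : ℝ | t ≤ x} := measurableSet_Iic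
      exact Measurable.ite this measurable_const measurable_const
    set Y : ℕ → Ω → ℝ := fun i ω => φ (X i ω) with hY
    have hYind : ∀ i ω, Y i ω = Set.indicator {ω' | X i ω' ≤ x} (fun _ => (1:ℝ)) ω := by
      intro i ω
      simp only [hY, hφ, Set.indicator_apply, Set.mem_setOf_eq]
    have hms : MeasurableSet {ω' | X 0 ω' ≤ x} := (hmeas 0) measurableSet_Iic
    have hYint : Integrable (Y 0) μ := by
      have : Integrable (Set.indicator {ω' | X 0 ω' ≤ x} (fun _ => (1:ℝ))) μ := by
        rw [integrable_indicator_iff hms]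
        exact integrableOn_const (measure_ne_top μ _)
      exact this.congr (Filter.Eventually.of_forall fun ω => (hYind 0 ω).symm)
    have hYexp : μ[Y 0] = F x := by
      have : μ[Y 0] = ∫ ω, Set.indicator {ω' | X 0 ω' ≤ x} (fun _ => (1:ℝ)) ω ∂μ :=
        integral_congr_ae (Filter.Eventually.of_forall fun ω => hYind 0 ω)
      rw [this, integral_indicator_const _ hms, hF x]
      simp [measureReal_def]
    have hYpind : Pairwise (Function.onFun (IndepFun · · μ) Y) := by
      intro i j hij
      exact (hindep.indepFun hij).comp hφm hφm
    have hYident : ∀ i, IdentDistrib (Y i) (Y 0) μ μ :=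
      fun i => (hident i).comp hφm
    have hslln := strong_law_ae_real Y hYint hYpind hYident
    rw [hYexp] at hslln
    filter_upwards [hslln] with ω hω
    have : (fun n => edf X n ω x) = fun n : ℕ => (∑ i ∈ Finset.range n, Y i ω) / n := by
      funext n
      unfold edf
      congr 1
      rw [Finset.sum_boole]
    rw [this]
    exact hω
  set q := rq F p with hq
  -- the set {x | p < F x} is nonempty
  have hS_ne : ∃ b, p < F b := by
    have hmon : Monotone (fun n : ℕ => {ω | X 0 ω ≤ (n : ℝ)}) := by
      intro m n hmn ω hω
      simp only [Set.mem_setOf_eq] at *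
      exact le_trans hω (Nat.cast_le.mpr hmn)
    have hU : (⋃ n : ℕ, {ω | X 0 ω ≤ (n : ℝ)}) = Set.univ := by
      ext ω
      simp only [Set.mem_iUnion, Set.mem_setOf_eq, Set.mem_univ, iff_true]
      exact exists_nat_ge (X 0 ω)
    have := tendsto_measure_iUnion_atTop (μ := μ) hmon
    rw [hU, measure_univ] at this
    have h1 : Tendsto (fun n : ℕ => F (n : ℝ)) atTop (𝓝 1) := by
      have := (ENNReal.tendsto_toReal (by norm_num : (1:ENNReal) ≠ ⊤)).comp this
      simpa [Function.comp_def, hF] using this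
    obtain ⟨n, hn⟩ := (h1.eventually_const_lt hp1).exists
    exact ⟨n, hn⟩
  -- the set {x | p < F x} is bounded below
  have hlb : ∃ a : ℝ, F a < p := by
    have hanti : Antitone (fun n : ℕ => {ω | X 0 ω ≤ -(n : ℝ)}) := by
      intro m n hmn ω hω
      simp only [Set.mem_setOf_eq] at *
      exact le_trans hω (neg_le_neg (Nat.cast_le.mpr hmn))
    have hI : (⋂ n : ℕ, {ω | X 0 ω ≤ -(n : ℝ)}) = ∅ := by
      ext ω
      simp only [Set.mem_iInter, Set.mem_setOf_eq, Set.mem_empty_iff_false, iff_false, not_forall,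
        not_le]
      obtain ⟨n, hn⟩ := exists_nat_gt (-(X 0 ω))
      exact ⟨n, by linarith⟩
    have := tendsto_measure_iInter_atTop (μ := μ)
      (fun n => (show MeasurableSet {ω | X 0 ω ≤ -((n:ℕ):ℝ)} from (hmeas 0) measurableSet_Iic).nullMeasurableSet) hanti
      ⟨0, measure_ne_top μ _⟩
    rw [hI, measure_empty] at this
    have h1 : Tendsto (fun n : ℕ => F (-(n : ℝ))) atTop (𝓝 0) := by
      have := (ENNReal.tendsto_toReal (by norm_num : (0:ENNReal) ≠ ⊤)).comp this
      simpa [Function.comp_def, hF] using this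
    obtain ⟨n, hn⟩ := (h1.eventually_lt_const hp0).exists
    exact ⟨-(n : ℝ), hn⟩
  obtain ⟨a0, ha0⟩ := hlb
  have hS_bdd : BddBelow {x | p < F x} := by
    refine ⟨a0, fun y hy => ?_⟩
    by_contra hya
    push_neg at hya
    exact absurd (lt_of_lt_of_le hy (hFmono hya.le)) (not_lt.2 ha0.le)
  have hT_bdd : BddBelow {x | p ≤ F x} := by
    refine ⟨a0, fun y hy => ?_⟩
    by_contra hya
    push_neg at hya
    exact absurd (le_trans hy (hFmono hya.le)) (not_le.2 ha0)
  obtain ⟨b0, hb0⟩ := hS_ne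
  -- for each ε > 0 there is b in the set with b < q + ε; and F (q - ε) < p
  have hbk : ∀ k : ℕ, ∃ b, p < F b ∧ b < q + 1/((k:ℝ)+1) := by
    intro k
    have hqlt : sInf {x | p < F x} < q + 1/((k:ℝ)+1) := by
      have h0 : sInf {x | p < F x} = q := by rw [hq]; rfl
      have h2 : (0:ℝ) < 1/((k:ℝ)+1) := by positivity
      linarith
    obtain ⟨b, hb, hblt⟩ := (csInf_lt_iff hS_bdd ⟨b0, hb0⟩).1 hqlt
    exact ⟨b, hb, hblt⟩
  choose b hbS hblt using hbk
  have hak : ∀ k : ℕ, F (q - 1/((k:ℝ)+1)) < p := by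
    intro k
    by_contra h
    push_neg at h
    have hmem : q - 1/((k:ℝ)+1) ∈ {x | p ≤ F x} := h
    have h1 : lq F p ≤ q - 1/((k:ℝ)+1) := csInf_le hT_bdd hmem
    rw [heq] at h1
    have h2 : (0:ℝ) < 1/((k:ℝ)+1) := by positivity
    linarith
  -- b k ≥ q
  have hbge : ∀ k, q ≤ b k := fun k => csInf_le hS_bdd (hbS k)
  -- main argument
  have hmain := ae_all_iff.2 (fun k : ℕ => ((key (q - 1/((k:ℝ)+1))).and (key (b k))))
  filter_upwards [hmain] with ω hω
  rw [Metric.tendsto_nhds]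
  intro ε hε
  obtain ⟨k, hk⟩ := exists_nat_one_div_lt hε
  obtain ⟨h1, h2⟩ := hω k
  have ev1 : ∀ᶠ n in atTop, edf X n ω (q - 1/((k:ℝ)+1)) < p :=
    h1.eventually_lt_const (hak k)
  have ev2 : ∀ᶠ n in atTop, p < edf X n ω (b k) :=
    h2.eventually_const_lt (hbS k)
  filter_upwards [ev1, ev2] with n hn1 hn2
  set G := edf X n ω with hG
  have hGmono : Monotone G := edf_mono X n ω
  set a := q - 1/((k:ℝ)+1) with ha
  -- a is a lower bound of {x | p < G x}
  have hlbG : a ∈ lowerBounds {x | p < G x} := by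
    intro y hy
    by_contra hya
    push_neg at hya
    exact absurd (lt_of_lt_of_le hy (hGmono hya.le)) (not_lt.2 hn1.le)
  have hneG : b k ∈ {x | p < G x} := hn2
  have hle : rq G p ≤ b k := csInf_le ⟨a, hlbG⟩ hneG
  have hge : a ≤ rq G p := le_csInf ⟨b k, hneG⟩ hlbG
  have hd : (0:ℝ) < 1/((k:ℝ)+1) := by positivity
  rw [Real.dist_eq, abs_lt]
  constructor
  · have := hge
    rw [ha] at this
    linarith [hblt k, hbge k]
  · have := hle.trans_lt (hblt k)
    linarith
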